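/- Let $H_n$ and $W_m$ be finite-dimensional subspaces of a Hilbert space $V$ with $\beta(H_n, W_m) := \inf_{v \in H_n\setminus\{0\}} \|P_{W_m} v\|/\|v\| > 0$. Define $\widetilde{H}_n := H_n \oplus (H_n^\perp \cap W_m)$. Then $\beta(\widetilde{H}_n, W_m) = \beta(H_n, W_m)$. -/

import Mathlib

/-- The stability constant `β(A,B) = inf_{v ∈ A, v ≠ 0} ‖P_B v‖ / ‖v‖`. -/
noncomputable def beta {V : Type*} [NormedAddCommGroup V] [InnerProductSpace ℝ V]
    (A B : Submodule ℝ V) [B.HasOrthogonalProjection] : ℝ :=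
  sInf {r : ℝ | ∃ v ∈ A, v ≠ 0 ∧ r = ‖(B.orthogonalProjectionOnto v : V)‖ / ‖v‖}

theorem stmt_6 {V : Type*} [NormedAddCommGroup V] [InnerProductSpace ℝ V] [CompleteSpace V]
    (Hn Wm : Submodule ℝ V) [FiniteDimensional ℝ Hn] [FiniteDimensional ℝ Wm]
    (hβpos : 0 < beta Hn Wm) :
    beta (Hn ⊔ (Hnᗮ ⊓ Wm)) Wm = beta Hn Wm := by
  set P := Wm.orthogonalProjectionOnto
  set S : Submodule ℝ V → Set ℝ :=
    fun A => {r : ℝ | ∃ v ∈ A, v ≠ 0 ∧ r = ‖(P v : V)‖ / ‖v‖} with hS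
  have hbdd : ∀ A : Submodule ℝ V, BddBelow (S A) := by
    intro A
    refine ⟨0, ?_⟩
    rintro r ⟨v, _, _, rfl⟩
    positivity
  have hSne : (S Hn).Nonempty := by
    by_contra h
    rw [Set.not_nonempty_iff_eq_empty] at h
    have : beta Hn Wm = 0 := by
      unfold beta
      rw [show {r : ℝ | ∃ v ∈ Hn, v ≠ 0 ∧ r = ‖(Wm.orthogonalProjectionOnto v : V)‖ / ‖v‖} = S Hn
        from rfl, h, Real.sInf_empty]
    linarith
  -- projection contraction
  have hP_le : ∀ v : V, ‖(P v : V)‖ ≤ ‖v‖ := by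
    intro v
    calc ‖(P v : V)‖ = ‖P v‖ := rfl
    _ ≤ ‖P‖ * ‖v‖ := P.le_opNorm v
    _ ≤ 1 * ‖v‖ := by
        have := Submodule.orthogonalProjectionOnto_norm_le Wm
        have : ‖P‖ ≤ 1 := this
        nlinarith [norm_nonneg v]
    _ = ‖v‖ := one_mul _
  set β := beta Hn Wm with hβ
  -- β ≤ each element of S Hn
  have hβle : ∀ r ∈ S Hn, β ≤ r := fun r hr => csInf_le (hbdd Hn) hr
  have hβ1 : β ≤ 1 := by
    obtain ⟨r, v, hv, hv0, rfl⟩ := hSne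
    refine (hβle _ ⟨v, hv, hv0, rfl⟩).trans ?_
    rw [div_le_one (norm_pos_iff.mpr hv0)]
    exact hP_le v
  -- key: β‖h‖ ≤ ‖P h‖ for h ∈ Hn
  have hkey : ∀ h ∈ Hn, β * ‖h‖ ≤ ‖(P h : V)‖ := by
    intro h hh
    rcases eq_or_ne h 0 with rfl | h0
    · simp
    · have := hβle _ ⟨h, hh, h0, rfl⟩
      rw [le_div_iff₀ (norm_pos_iff.mpr h0)] at this
      linarith
  apply le_antisymm
  · exact csInf_le_csInf (hbdd _) hSne
      (fun r ⟨v, hv, hv0, hr⟩ => ⟨v, Submodule.mem_sup_left hv, hv0, hr⟩)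
  · obtain ⟨r0, v0, hv0m, hv00, hr0⟩ := hSne
    refine le_csInf ⟨r0, v0, Submodule.mem_sup_left hv0m, hv00, hr0⟩ ?_
    rintro r ⟨v, hv, hv0, rfl⟩
    rw [Submodule.mem_sup] at hv
    obtain ⟨h, hh, w, hw, rfl⟩ := hv
    have hwW : w ∈ Wm := hw.2
    have hwperp : w ∈ Hnᗮ := hw.1
    have hinner : (inner ℝ h w : ℝ) = 0 := hwperp h hh
    have hPw : (P w : V) = w := by
        rw [← Submodule.starProjection_apply]; exact Submodule.starProjection_eq_self_iff.mpr hwW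
    have hinnerP : (inner ℝ (P h : V) w : ℝ) = 0 := by
      have := Submodule.inner_starProjection_left_eq_right Wm h w
      simp only [Submodule.starProjection_apply] at this
      change inner ℝ (P h : V) w = inner ℝ h (P w : V) at this
      rw [hPw] at this
      rw [this, hinner]
    have hnv : ‖h + w‖ ^ 2 = ‖h‖ ^ 2 + ‖w‖ ^ 2 := by
      rw [norm_add_sq_real, hinner]; ring
    have hnP : ‖(P (h + w) : V)‖ ^ 2 = ‖(P h : V)‖ ^ 2 + ‖w‖ ^ 2 := by
      have : (P (h + w) : V) = (P h : V) + w := by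
        rw [map_add, Submodule.coe_add, hPw]
      rw [this, norm_add_sq_real, hinnerP]; ring
    rw [le_div_iff₀ (norm_pos_iff.mpr hv0)]
    have hsq : (β * ‖h + w‖) ^ 2 ≤ ‖(P (h + w) : V)‖ ^ 2 := by
      have h1 : (β * ‖h‖) ^ 2 ≤ ‖(P h : V)‖ ^ 2 :=
        pow_le_pow_left₀ (by positivity) (hkey h hh) 2
      have hβsq : β ^ 2 ≤ 1 := by nlinarith
      have h2 : β ^ 2 * ‖w‖ ^ 2 ≤ ‖w‖ ^ 2 := by nlinarith [sq_nonneg ‖w‖]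
      rw [hnP, mul_pow, hnv]
      rw [mul_pow] at h1
      linarith [h1, h2, (by ring : β ^ 2 * (‖h‖ ^ 2 + ‖w‖ ^ 2) = β ^ 2 * ‖h‖ ^ 2 + β ^ 2 * ‖w‖ ^ 2)]
    have h1 : 0 ≤ β * ‖h + w‖ := by positivity
    nlinarith [norm_nonneg (P (h + w) : V), hsq]
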